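/- Let (X,T) be a topological dynamical system on a compact metric space and suppose that for some d ≥ 1 and n ≥ 1 one has N_{d+1}(X,T) = N_{d+1}(X,T^n). Then the set Ω_d = {x ∈ X : closure of orbit of (x,…,x) under T×T²×…×T^d equals closure of orbit of (x,…,x) under T^n×T^{2n}×…×T^{dn}} contains a dense G_δ subset of X. -/

import Mathlib

open Metric Filter Set

/-- A real function with open strict sublevel sets (i.e. upper semicontinuous)
has a residual set of continuity points. -/
lemma usc_continuousAt_residual {α : Type*} [TopologicalSpace α] (f : α → ℝ)
    (hopen : ∀ r : ℝ, IsOpen {x | f x < r}) :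
    {x | ContinuousAt f x} ∈ residual α := by
  classical
  set C : ℚ × ℚ → Set α := fun p => closure {x | f x < (p.1 : ℝ)} ∩ {x | (p.2 : ℝ) ≤ f x} with hC
  have hempty : ∀ p : ℚ × ℚ, p.1 < p.2 → interior (C p) = ∅ := by
    intro p hp
    by_contra h
    obtain ⟨x, hx⟩ := Set.nonempty_iff_ne_empty.mpr h
    have hx1 : x ∈ closure {y | f y < (p.1 : ℝ)} := (interior_subset hx).1
    rw [_root_.mem_closure_iff] at hx1
    obtain ⟨y, hy, hyq⟩ := hx1 (interior (C p)) isOpen_interior hx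
    have h2 : (p.2 : ℝ) ≤ f y := (interior_subset hy).2
    have hq : (p.1 : ℝ) < p.2 := by exact_mod_cast hp
    simp only [mem_setOf_eq] at hyq
    linarith
  have hres : (⋂ p ∈ {p : ℚ × ℚ | p.1 < p.2}, (C p)ᶜ) ∈ residual α := by
    rw [countable_bInter_mem (Set.to_countable _)]
    intro p hp
    have hco : {x | (p.2 : ℝ) ≤ f x} = {x | f x < (p.2 : ℝ)}ᶜ := by
      ext y; simp [not_lt]
    have hclosed : IsClosed (C p) := by
      rw [hC]
      exact isClosed_closure.inter (by rw [hco]; exact (hopen _).isClosed_compl)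
    have hdense : Dense (C p)ᶜ := interior_eq_empty_iff_dense_compl.mp (hempty p hp)
    exact residual_of_dense_open hclosed.isOpen_compl hdense
  refine mem_of_superset hres ?_
  intro x hx
  simp only [mem_iInter, mem_compl_iff] at hx
  show ContinuousAt f x
  rw [ContinuousAt]
  refine tendsto_order.2 ⟨?_, ?_⟩
  · intro a ha
    obtain ⟨q, hq1, hq2⟩ := exists_rat_btwn ha
    obtain ⟨r, hr1, hr2⟩ := exists_rat_btwn hq2
    have hqr : q < r := by exact_mod_cast hr1
    have hx' := hx (q, r) hqr
    have hxnc : x ∉ closure {y | f y < (q : ℝ)} := by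
      intro hmem
      exact hx' ⟨hmem, le_of_lt hr2⟩
    have : ∀ᶠ y in nhds x, y ∈ (closure {y | f y < (q : ℝ)})ᶜ :=
      isClosed_closure.isOpen_compl.mem_nhds hxnc
    filter_upwards [this] with y hy
    have : ¬ f y < (q : ℝ) := fun hlt => hy (subset_closure hlt)
    linarith [not_lt.mp this]
  · intro b hb
    have : ∀ᶠ y in nhds x, y ∈ {y | f y < b} := (hopen b).mem_nhds hb
    filter_upwards [this] with y hy using hy

/-- `N_d(X,S)`: the closure of the orbit of the diagonal `Δ_d(X)` under
`S × S² × … × S^d`. -/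
def NdTau {X : Type*} [MetricSpace X] (d : ℕ) (S : Equiv.Perm X) :
    Set (Fin d → X) :=
  closure {v | ∃ (x : X) (m : ℤ), v = fun i : Fin d => (S ^ (((i : ℕ) + 1) * m)) x}

/-- if `N_{d+1}(X,T) = N_{d+1}(X,T^n)` for some `d, n ≥ 1`, then
`Ω_d = {x : cl O(x^{(d)}, T×T²×…×T^d) = cl O(x^{(d)}, T^n×T^{2n}×…×T^{dn})}`
contains a dense `G_δ` subset of `X`. -/
theorem stmt_11 {X : Type*} [MetricSpace X] [CompactSpace X] (T : X ≃ₜ X)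
    (d n : ℕ) (hd : 1 ≤ d) (hn : 1 ≤ n)
    (hN : NdTau (d + 1) T.toEquiv = NdTau (d + 1) (T.toEquiv ^ n)) :
    ∃ G : Set X,
      G ⊆ {x : X |
        closure {v : Fin d → X | ∃ m : ℤ,
            v = fun i : Fin d => (T.toEquiv ^ (((i : ℕ) + 1) * m)) x} =
        closure {v : Fin d → X | ∃ m : ℤ,
            v = fun i : Fin d => ((T.toEquiv ^ n) ^ (((i : ℕ) + 1) * m)) x}} ∧
      IsGδ G ∧ Dense G := by
  classical
  set e := T.toEquiv with he
  -- continuity of integer powers of `e`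
  have hcont : ∀ m : ℤ, Continuous fun x : X => (e ^ m) x := by
    intro m
    induction m using Int.induction_on with
    | zero => simpa using continuous_id'
    | succ k ih =>
      have hrw : ∀ x : X, (e ^ ((k : ℤ) + 1)) x = e ((e ^ (k : ℤ)) x) := by
        intro x
        rw [add_comm, zpow_add, zpow_one, Equiv.Perm.mul_apply]
      simp only [hrw]; exact T.continuous.comp ih
    | pred k ih =>
      have hrw : ∀ x : X, (e ^ (-(k : ℤ) - 1)) x = e⁻¹ ((e ^ (-(k : ℤ))) x) := by
        intro x
        rw [sub_eq_add_neg, add_comm, zpow_add, zpow_neg_one, Equiv.Perm.mul_apply]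
      have hsymm : Continuous fun x : X => e⁻¹ x := by
        have : (fun x : X => e⁻¹ x) = fun x : X => T.symm x := rfl
        rw [this]; exact T.symm.continuous
      simp only [hrw]; exact hsymm.comp ih
  have hpow : ∀ c : ℤ, ((e ^ n : Equiv.Perm X) ^ c) = e ^ ((n : ℤ) * c) := by
    intro c
    rw [← zpow_natCast e n, ← zpow_mul]
  have hcont' : ∀ m : ℤ, Continuous fun x : X => ((e ^ n : Equiv.Perm X) ^ m) x := by
    intro m; rw [hpow m]; exact hcont _
  -- the two orbit sets
  set S0 : X → Set (Fin d → X) :=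
    fun x => {v | ∃ m : ℤ, v = fun i : Fin d => (e ^ (((i : ℕ) + 1) * m)) x} with hS0
  set S1 : X → Set (Fin d → X) :=
    fun x => {v | ∃ m : ℤ, v = fun i : Fin d => ((e ^ n) ^ (((i : ℕ) + 1) * m)) x} with hS1
  have hS1ne : ∀ x, (S1 x).Nonempty := fun x => ⟨_, 0, rfl⟩
  -- countable dense subset of the product
  obtain ⟨D, hDc, hDd⟩ := TopologicalSpace.exists_countable_dense (Fin d → X)
  set g : (Fin d → X) → X → ℝ := fun z x => infDist z (S1 x) with hg
  -- sublevel sets of `g z` are open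
  have hgopen : ∀ z r, IsOpen {x | g z x < r} := by
    intro z r
    rw [isOpen_iff_mem_nhds]
    intro x hx
    obtain ⟨p, hp, hpr⟩ := (infDist_lt_iff (hS1ne x)).mp hx
    obtain ⟨m, hm⟩ := hp
    have hφ : Continuous fun y : X => (fun i : Fin d => ((e ^ n) ^ (((i : ℕ) + 1) * m)) y) :=
      continuous_pi fun i => hcont' _
    have hev : ∀ᶠ y in nhds x,
        dist z (fun i : Fin d => ((e ^ n) ^ (((i : ℕ) + 1) * m)) y) < r := by
      have hcd : Continuous fun y : X =>
          dist z (fun i : Fin d => ((e ^ n) ^ (((i : ℕ) + 1) * m)) y) :=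
        continuous_const.dist hφ
      have hval : dist z (fun i : Fin d => ((e ^ n) ^ (((i : ℕ) + 1) * m)) x) < r := by
        rw [← hm]; exact hpr
      exact (hcd.continuousAt (x := x)).eventually_lt_const hval
    filter_upwards [hev] with y hy
    exact lt_of_le_of_lt (infDist_le_dist_of_mem ⟨m, rfl⟩) hy
  -- the residual set of simultaneous continuity points
  have hres : {x | ∀ z ∈ D, ContinuousAt (g z) x} ∈ residual X := by
    have heq : {x | ∀ z ∈ D, ContinuousAt (g z) x}
        = ⋂ z ∈ D, {x | ContinuousAt (g z) x} := by
      ext x; simp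
    rw [heq, countable_bInter_mem hDc]
    intro z _
    exact usc_continuousAt_residual (g z) (hgopen z)
  -- the key implication
  have hkey : ∀ x : X, (∀ z ∈ D, ContinuousAt (g z) x) →
      closure (S0 x) = closure (S1 x) := by
    intro x hx
    have hsub1 : S1 x ⊆ S0 x := by
      rintro v ⟨m, rfl⟩
      refine ⟨(n : ℤ) * m, ?_⟩
      funext i
      rw [hpow]
      congr 1
      ring_nf
    have hsub0 : S0 x ⊆ closure (S1 x) := by
      rintro v ⟨m, rfl⟩
      set w' : Fin d → X := fun i => (e ^ (((i : ℕ) + 1) * m)) x with hw'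
      have hinf : infDist w' (S1 x) = 0 := by
        refine le_antisymm ?_ infDist_nonneg
        refine le_of_forall_pos_le_add fun ε hε => ?_
        rw [zero_add]
        refine le_of_lt ?_
        -- pick z in D close to w'
        have hε4 : (0 : ℝ) < ε / 4 := by linarith
        obtain ⟨z, hzD, hzd⟩ := hDd.exists_dist_lt w' hε4
        -- continuity of g z at x
        obtain ⟨δ₀, hδ₀, hδ⟩ := Metric.continuousAt_iff.mp (hx z hzD) (ε / 4) hε4
        -- the (d+1)-dimensional diagonal point
        set w : Fin (d + 1) → X := fun i => (e ^ ((i : ℕ) * m)) x with hw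
        have hwmem : w ∈ NdTau (d + 1) e := by
          apply subset_closure
          refine ⟨(e ^ (-m)) x, m, ?_⟩
          funext i
          show (e ^ ((i : ℕ) * m)) x = (e ^ (((i : ℕ) + 1) * m)) ((e ^ (-m)) x)
          have : (e ^ (((i : ℕ) + 1) * m)) ((e ^ (-m)) x)
              = (e ^ ((((i : ℕ) + 1) * m) + (-m))) x := by
            rw [zpow_add, Equiv.Perm.mul_apply]
          rw [this]
          congr 2
          ring
        rw [he] at hwmem
        rw [hN] at hwmem
        rw [NdTau, Metric.mem_closure_iff] at hwmem
        set δ := min δ₀ (ε / 4) with hδdef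
        have hδpos : 0 < δ := lt_min hδ₀ hε4
        obtain ⟨u, hu, hud⟩ := hwmem δ hδpos
        obtain ⟨y, k, rfl⟩ := hu
        set y' : X := ((e ^ n : Equiv.Perm X) ^ k) y with hy'
        set u : Fin (d + 1) → X :=
          fun i => ((T.toEquiv ^ n : Equiv.Perm X) ^ (((i : ℕ) + 1) * k)) y with hu'
        -- distance from y' to x
        have hyx : dist y' x < δ₀ := by
          have h0 : u 0 = y' := by
            show ((T.toEquiv ^ n : Equiv.Perm X) ^ ((((0 : Fin (d+1)) : ℕ) + 1) * k)) y = y'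
            norm_num [hy', he]
          have hw0 : w 0 = x := by
            show (e ^ (((0 : Fin (d+1)) : ℕ) * m)) x = x
            norm_num
          calc dist y' x = dist (u 0) (w 0) := by rw [h0, hw0]
            _ ≤ dist u w := dist_le_pi_dist u w 0
            _ = dist w u := dist_comm u w
            _ < δ := hud
            _ ≤ δ₀ := min_le_left _ _
        -- the approximating orbit point of y'
        set p : Fin d → X := fun i => ((e ^ n : Equiv.Perm X) ^ (((i : ℕ) + 1) * k)) y' with hp
        have hpmem : p ∈ S1 y' := ⟨k, rfl⟩
        have hpw : dist w' p < ε / 4 := by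
          rw [dist_pi_lt_iff hε4]
          intro i
          have hexp1 : ((i.succ : ℕ) : ℤ) * m = (((i : ℕ) : ℤ) + 1) * m := by
            rw [Fin.val_succ]; push_cast; ring
          have h1 : w' i = w i.succ := by
            show (e ^ (((i : ℕ) + 1) * m)) x = (e ^ (((i.succ : ℕ)) * m)) x
            rw [hexp1]
          have hexp2 : (((i.succ : ℕ) : ℤ) + 1) * k = (((i : ℕ) : ℤ) + 1) * k + k := by
            rw [Fin.val_succ]; push_cast; ring
          have h2 : p i = u i.succ := by
            show ((e ^ n : Equiv.Perm X) ^ (((i : ℕ) + 1) * k)) y'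
                = ((T.toEquiv ^ n : Equiv.Perm X) ^ (((i.succ : ℕ) + 1) * k)) y
            rw [hexp2, hy', ← he, ← Equiv.Perm.mul_apply, ← zpow_add]
          calc dist (w' i) (p i) = dist (w i.succ) (u i.succ) := by rw [h1, h2]
            _ ≤ dist w u := dist_le_pi_dist w u i.succ
            _ < δ := hud
            _ ≤ ε / 4 := min_le_right _ _
        -- conclude
        have hgy' : g z y' < ε / 2 := by
          calc g z y' ≤ dist z p := infDist_le_dist_of_mem hpmem
            _ ≤ dist z w' + dist w' p := dist_triangle z w' p
            _ < ε / 4 + ε / 4 := by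
                have : dist z w' < ε / 4 := by rw [dist_comm]; exact hzd
                linarith [hpw]
            _ = ε / 2 := by ring
        have hgx : g z x < 3 * ε / 4 := by
          have := hδ hyx
          rw [Real.dist_eq] at this
          have := abs_lt.mp this
          linarith [this.2]
        calc infDist w' (S1 x) ≤ infDist z (S1 x) + dist w' z :=
              infDist_le_infDist_add_dist
          _ = g z x + dist w' z := rfl
          _ < 3 * ε / 4 + ε / 4 := by linarith [hzd]
          _ = ε := by ring
      exact (Metric.mem_closure_iff_infDist_zero (hS1ne x)).mpr hinf
    refine le_antisymm ?_ (closure_mono hsub1)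
    have : closure (S0 x) ⊆ closure (closure (S1 x)) := closure_mono hsub0
    rwa [closure_closure] at this
  obtain ⟨t, hts, htG, htd⟩ := mem_residual.mp hres
  exact ⟨t, fun x hxt => hkey x (hts hxt), htG, htd⟩
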